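/- Projected subgradient convergence in function value: let X ⊆ ℝ^d be compact convex, f convex with subgradients bounded by G on X, and step sizes α^t > 0 with ∑ α^t = ∞ and ∑ (α^t)² < ∞. Then the iterates x^{t+1} = proj_X(x^t − α^t g^t), g^t a subgradient of f at x^t, satisfy liminf_{t→∞} f(x^t) = min_{z∈X} f(z). -/

import Mathlib

set_option maxHeartbeats 1000000

open Filter Finset

theorem projected_subgradient_liminf (d : ℕ)
    (X : Set (EuclideanSpace ℝ (Fin d)))
    (hXcompact : IsCompact X) (hXconvex : Convex ℝ X) (hXne : X.Nonempty)
    (f : EuclideanSpace ℝ (Fin d) → ℝ) (hf : ConvexOn ℝ Set.univ f)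
    (G : ℝ)
    (α : ℕ → ℝ) (hαpos : ∀ t, 0 < α t)
    (hα1 : ¬ Summable α) (hα2 : Summable (fun t => (α t) ^ 2))
    (x : ℕ → EuclideanSpace ℝ (Fin d)) (hx0 : x 0 ∈ X)
    (g : ℕ → EuclideanSpace ℝ (Fin d))
    (hsub : ∀ t, ∀ y, f y ≥ f (x t) + inner ℝ (g t) (y - x t))
    (hGbound : ∀ t, ‖g t‖ ≤ G)
    (hproj : ∀ t, x (t + 1) ∈ X ∧
      ∀ y ∈ X, ‖x t - α t • g t - x (t + 1)‖ ≤ ‖x t - α t • g t - y‖) :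
    Filter.liminf (fun t => f (x t)) Filter.atTop = sInf (f '' X) := by
  have hG0 : 0 ≤ G := le_trans (norm_nonneg _) (hGbound 0)
  -- all iterates stay in X
  have hxX : ∀ t, x t ∈ X := by
    intro t
    induction t with
    | zero => exact hx0
    | succ n _ => exact (hproj n).1
  -- X is bounded
  obtain ⟨R, hR⟩ := Metric.isBounded_iff.mp hXcompact.isBounded
  have hRnn : 0 ≤ R := le_trans dist_nonneg (hR hx0 hx0)
  have hinnerbound : ∀ t, ∀ y ∈ X, |(inner ℝ (g t) (y - x t) : ℝ)| ≤ G * R := by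
    intro t y hy
    calc |(inner ℝ (g t) (y - x t) : ℝ)| ≤ ‖g t‖ * ‖y - x t‖ := abs_real_inner_le_norm _ _
    _ ≤ G * R := by
        apply mul_le_mul (hGbound t) ?_ (norm_nonneg _) hG0
        rw [← dist_eq_norm]
        exact hR hy (hxX t)
  -- f is bounded below on X
  have hbdd : BddBelow (f '' X) := by
    refine ⟨f (x 0) - G * R, ?_⟩
    rintro v ⟨y, hy, rfl⟩
    have h1 := hsub 0 y
    have h2 := abs_le.mp (hinnerbound 0 y hy)
    linarith [h2.1]
  set m := sInf (f '' X) with hm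
  have hmle : ∀ t, m ≤ f (x t) := fun t => csInf_le hbdd ⟨x t, hxX t, rfl⟩
  -- f(x t) bounded above
  obtain ⟨z0, hz0⟩ := hXne
  have hub : ∀ t, f (x t) ≤ f z0 + G * R := by
    intro t
    have h1 := hsub t z0
    have h2 := abs_le.mp (hinnerbound t z0 hz0)
    linarith [h2.1]
  have hbddabove : IsBoundedUnder (· ≤ ·) atTop (fun t => f (x t)) :=
    isBoundedUnder_of ⟨f z0 + G * R, hub⟩
  have hbddbelow : IsBoundedUnder (· ≥ ·) atTop (fun t => f (x t)) :=
    isBoundedUnder_of ⟨m, hmle⟩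
  -- key per-step inequality
  have hstep : ∀ t, ∀ z ∈ X, ‖x (t+1) - z‖^2 ≤
      ‖x t - z‖^2 - 2 * α t * (f (x t) - f z) + α t ^ 2 * G ^ 2 := by
    intro t z hz
    set u := x t - α t • g t with hu
    set v := x (t+1) with hv
    have hvX : v ∈ X := (hproj t).1
    have hinf : ‖u - v‖ = ⨅ w : X, ‖u - w‖ := by
      haveI : Nonempty X := ⟨⟨v, hvX⟩⟩
      have hb : BddBelow (Set.range fun w : X => ‖u - w‖) := by
        refine ⟨0, ?_⟩
        rintro r ⟨w, rfl⟩
        exact norm_nonneg _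
      refine le_antisymm (le_ciInf fun w => (hproj t).2 w w.2) (ciInf_le hb ⟨v, hvX⟩)
    have hobtuse : (inner ℝ (u - v) (z - v) : ℝ) ≤ 0 :=
      (norm_eq_iInf_iff_real_inner_le_zero hXconvex hvX).mp hinf z hz
    -- ‖v - z‖² ≤ ‖u - z‖²
    have h1 : ‖v - z‖^2 ≤ ‖u - z‖^2 := by
      have hdecomp : u - z = (u - v) + (v - z) := by abel
      have := norm_add_sq_real (u - v) (v - z)
      rw [hdecomp, this]
      have hneg : (inner ℝ (u - v) (v - z) : ℝ) = -(inner ℝ (u - v) (z - v) : ℝ) := by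
        rw [← inner_neg_right]; congr 1; abel
      nlinarith [sq_nonneg ‖u - v‖]
    -- expand ‖u - z‖²
    have h2 : ‖u - z‖^2 = ‖x t - z‖^2 - 2 * (α t * (inner ℝ (g t) (x t - z) : ℝ))
        + α t ^ 2 * ‖g t‖^2 := by
      have hrw : u - z = (x t - z) - α t • g t := by rw [hu]; abel
      rw [hrw, norm_sub_sq_real, real_inner_smul_right, real_inner_comm, norm_smul,
        Real.norm_eq_abs, mul_pow, sq_abs]
    have h3 : (inner ℝ (g t) (x t - z) : ℝ) ≥ f (x t) - f z := by
      have h4 := hsub t z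
      have h5 : (inner ℝ (g t) (z - x t) : ℝ) = -(inner ℝ (g t) (x t - z) : ℝ) := by
        rw [← inner_neg_right]; congr 1; abel
      linarith [h4, h5.ge]
    have h6 : α t ^ 2 * ‖g t‖^2 ≤ α t ^ 2 * G ^ 2 := by
      apply mul_le_mul_of_nonneg_left ?_ (sq_nonneg _)
      exact pow_le_pow_left₀ (norm_nonneg _) (hGbound t) 2
    have h7 : 2 * (α t * (inner ℝ (g t) (x t - z) : ℝ)) ≥ 2 * α t * (f (x t) - f z) := by
      have := mul_le_mul_of_nonneg_left h3 (hαpos t).le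
      linarith
    linarith
  -- telescoped bound
  set S := ∑' t, (α t)^2 with hS
  have hsumbound : ∀ z ∈ X, ∀ T,
      ∑ t ∈ range T, α t * (f (x t) - f z) ≤ (‖x 0 - z‖^2 + G^2 * S) / 2 := by
    intro z hz T
    have htel : ∀ T, ∑ t ∈ range T, (2 * α t * (f (x t) - f z)) ≤
        ‖x 0 - z‖^2 + G^2 * ∑ t ∈ range T, α t ^ 2 - ‖x T - z‖^2 := by
      intro T
      induction T with
      | zero => simp
      | succ n ih =>
        rw [Finset.sum_range_succ, Finset.sum_range_succ]
        have := hstep n z hz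
        linarith
    have hSge : ∑ t ∈ range T, α t ^ 2 ≤ S :=
      Summable.sum_le_tsum (range T) (fun i _ => sq_nonneg _) hα2
    have hnn : (0:ℝ) ≤ ‖x T - z‖^2 := sq_nonneg _
    have h2 : ∑ t ∈ range T, (2 * α t * (f (x t) - f z)) =
        2 * ∑ t ∈ range T, α t * (f (x t) - f z) := by
      rw [Finset.mul_sum]; congr 1; ext t; ring
    have := htel T
    rw [h2] at this
    nlinarith [this, hSge, sq_nonneg G]
  -- liminf ≥ m
  set L := liminf (fun t => f (x t)) atTop with hL
  have h1 : m ≤ L := le_liminf_of_le hbddabove.isCoboundedUnder_ge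
    (Eventually.of_forall hmle)
  -- liminf ≤ m
  have h2 : L ≤ m := by
    by_contra hcon
    push_neg at hcon
    set ε := (L - m) / 3 with hε
    have hεpos : 0 < ε := by simp only [hε]; linarith
    obtain ⟨v, ⟨z, hzX, rfl⟩, hvlt⟩ :=
      exists_lt_of_csInf_lt (show (f '' X).Nonempty from ⟨f (x 0), ⟨x 0, hx0, rfl⟩⟩) (show sInf (f '' X) < m + ε by linarith)
    have hev : ∀ᶠ t in atTop, L - ε < f (x t) :=
      eventually_lt_of_lt_liminf (by linarith) hbddbelow
    obtain ⟨T0, hT0⟩ := eventually_atTop.mp hev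
    have hterm : ∀ t, T0 ≤ t → ε ≤ f (x t) - f z := by
      intro t ht
      have := hT0 t ht
      simp only [hε] at *
      linarith
    set C := (‖x 0 - z‖^2 + G^2 * S) / 2 with hC
    set K := ∑ t ∈ range T0, α t * (f (x t) - f z) with hK
    set A : ℕ → ℝ := fun n => ∑ t ∈ range n, α t with hA
    have hAtend : Tendsto A atTop atTop :=
      (not_summable_iff_tendsto_nat_atTop_of_nonneg (fun i => (hαpos i).le)).mp hα1
    obtain ⟨T, hTge, hTbig⟩ : ∃ T, T0 ≤ T ∧ A T0 + (C - K) / ε + 1 ≤ A T := by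
      obtain ⟨T1, hT1⟩ := (tendsto_atTop.mp hAtend (A T0 + (C - K) / ε + 1)).exists_forall_of_atTop
      exact ⟨max T0 T1, le_max_left _ _, hT1 _ (le_max_right _ _)⟩
    -- split the sum
    have hsplit : ∑ t ∈ range T, α t * (f (x t) - f z)
        = K + ∑ t ∈ Ico T0 T, α t * (f (x t) - f z) := by
      rw [hK, ← Finset.sum_range_add_sum_Ico _ hTge]
    have hlower : ε * (A T - A T0) ≤ ∑ t ∈ Ico T0 T, α t * (f (x t) - f z) := by
      have : A T - A T0 = ∑ t ∈ Ico T0 T, α t := by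
        have h := Finset.sum_range_add_sum_Ico α hTge
        simp only [hA]
        linarith
      rw [this, Finset.mul_sum]
      apply Finset.sum_le_sum
      intro t ht
      rw [Finset.mem_Ico] at ht
      have h1 := hterm t ht.1
      have h2 := (hαpos t).le
      calc ε * α t ≤ (f (x t) - f z) * α t := mul_le_mul_of_nonneg_right h1 h2
      _ = α t * (f (x t) - f z) := by ring
    have hfinal := hsumbound z hzX T
    rw [hsplit] at hfinal
    have hεA : ε * ((C - K) / ε + 1) ≤ ε * (A T - A T0) := by
      apply mul_le_mul_of_nonneg_left ?_ hεpos.le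
      linarith
    rw [mul_add, mul_one, mul_div_cancel₀ _ hεpos.ne'] at hεA
    linarith
  exact le_antisymm h2 h1
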